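/- Let γ ≥ 1, let P⁺, P⁻ > 0 with P⁺ ≠ P⁻, and define f(P) = P^γ + (P⁻P⁺/P)·((P⁺)^γ - (P⁻)^γ)/(P⁺ - P⁻) - ((P⁺)^(γ+1) - (P⁻)^(γ+1))/(P⁺ - P⁻) for P > 0. Then f(P⁺) = f(P⁻) = 0, f''(P) > 0 for all P > 0, and P⁺ and P⁻ are the only zeros of f on (0,∞). -/

import Mathlib

open Real Set

/-- Properties of `f(P) = P^γ + (P⁻P⁺/P)·((P⁺)^γ-(P⁻)^γ)/(P⁺-P⁻)
- ((P⁺)^(γ+1)-(P⁻)^(γ+1))/(P⁺-P⁻)`: the end states are its only positive zeros and it is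
strictly convex on `(0,∞)`. -/
theorem f_zeros_and_convexity
    (γ Pp Pm : ℝ) (hγ : 1 ≤ γ) (hPp : 0 < Pp) (hPm : 0 < Pm) (hne : Pp ≠ Pm)
    (f : ℝ → ℝ)
    (hf : ∀ P : ℝ, 0 < P →
      f P = P ^ γ + (Pm * Pp / P) * ((Pp ^ γ - Pm ^ γ) / (Pp - Pm)) -
        (Pp ^ (γ + 1) - Pm ^ (γ + 1)) / (Pp - Pm)) :
    f Pp = 0 ∧ f Pm = 0 ∧
    (∀ P : ℝ, 0 < P → 0 < deriv (deriv f) P) ∧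
    (∀ P : ℝ, 0 < P → f P = 0 → P = Pp ∨ P = Pm) := by
  have hγ0 : (0:ℝ) < γ := lt_of_lt_of_le one_pos hγ
  have hsub : Pp - Pm ≠ 0 := sub_ne_zero.2 hne
  set C : ℝ := (Pp ^ γ - Pm ^ γ) / (Pp - Pm) with hC
  set A : ℝ := Pm * Pp * C with hA
  set D : ℝ := (Pp ^ (γ + 1) - Pm ^ (γ + 1)) / (Pp - Pm) with hD
  have hCpos : 0 < C := by
    rcases hne.lt_or_gt with h | h
    · rw [hC]
      apply div_pos_of_neg_of_neg
      · exact sub_neg.2 (Real.rpow_lt_rpow hPp.le h hγ0)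
      · exact sub_neg.2 h
    · exact div_pos (sub_pos.2 (Real.rpow_lt_rpow hPm.le h hγ0)) (sub_pos.2 h)
  have hApos : 0 < A := by rw [hA]; positivity
  have hfg : ∀ P : ℝ, 0 < P → f P = P ^ γ + A / P - D := by
    intro P hP
    rw [hf P hP, hA]
    ring
  have hfPp : f Pp = 0 := by
    rw [hfg Pp hPp, hA, hC, hD, Real.rpow_add hPp, Real.rpow_add hPm,
      Real.rpow_one, Real.rpow_one]
    field_simp
    ring
  have hfPm : f Pm = 0 := by
    rw [hfg Pm hPm, hA, hC, hD, Real.rpow_add hPp, Real.rpow_add hPm,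
      Real.rpow_one, Real.rpow_one]
    field_simp
    ring
  -- first derivative
  have hf' : ∀ P : ℝ, 0 < P →
      HasDerivAt f (γ * P ^ (γ - 1) - A / P ^ 2) P := by
    intro P hP
    have ha : HasDerivAt (fun Q : ℝ => Q ^ γ) (γ * P ^ (γ - 1)) P :=
      Real.hasDerivAt_rpow_const (Or.inl hP.ne')
    have hb : HasDerivAt (fun Q : ℝ => A / Q) (-(A / P ^ 2)) P := by
      have h1 := (hasDerivAt_inv hP.ne').const_mul A
      have h2 : A * -(P ^ 2)⁻¹ = -(A / P ^ 2) := by field_simp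
      rw [h2] at h1
      simpa [div_eq_mul_inv] using h1
    have hg : HasDerivAt (fun Q : ℝ => Q ^ γ + A / Q - D)
        (γ * P ^ (γ - 1) - A / P ^ 2) P := by
      have := (ha.add hb).sub_const D
      exact this.congr_deriv (by ring)
    apply hg.congr_of_eventuallyEq
    filter_upwards [Ioi_mem_nhds hP] with Q hQ using hfg Q hQ
  have hderiv1 : ∀ P : ℝ, 0 < P → deriv f P = γ * P ^ (γ - 1) - A / P ^ 2 :=
    fun P hP => (hf' P hP).deriv
  -- second derivative
  have hderiv2 : ∀ P : ℝ, 0 < P →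
      deriv (deriv f) P = γ * ((γ - 1) * P ^ (γ - 1 - 1)) + A * (2 * P / (P ^ 2) ^ 2) := by
    intro P hP
    have hev : deriv f =ᶠ[nhds P] fun Q => γ * Q ^ (γ - 1) - A / Q ^ 2 := by
      filter_upwards [Ioi_mem_nhds hP] with Q hQ using hderiv1 Q hQ
    rw [hev.deriv_eq]
    have ha : HasDerivAt (fun Q : ℝ => Q ^ (γ - 1)) ((γ - 1) * P ^ (γ - 1 - 1)) P :=
      Real.hasDerivAt_rpow_const (Or.inl hP.ne')
    have hb : HasDerivAt (fun Q : ℝ => Q ^ 2) (2 * P : ℝ) P := by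
      simpa using hasDerivAt_pow 2 P
    have hb' : HasDerivAt (fun Q : ℝ => A / Q ^ 2) (-(A * (2 * P / (P ^ 2) ^ 2))) P := by
      have h1 := (hb.inv (pow_ne_zero 2 hP.ne')).const_mul A
      have h2 : A * (-(2 * P) / ((P ^ 2) ^ 2)) = -(A * (2 * P / (P ^ 2) ^ 2)) := by ring
      rw [h2] at h1
      simpa [div_eq_mul_inv] using h1
    rw [HasDerivAt.deriv (f := fun Q => γ * Q ^ (γ - 1) - A / Q ^ 2) ((ha.const_mul γ).sub hb')]
    ring
  have hpos : ∀ P : ℝ, 0 < P → 0 < deriv (deriv f) P := by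
    intro P hP
    rw [hderiv2 P hP]
    have h1 : 0 ≤ γ * ((γ - 1) * P ^ (γ - 1 - 1)) := by
      have := Real.rpow_pos_of_pos hP (γ - 1 - 1)
      have h2 : 0 ≤ γ - 1 := by linarith
      positivity
    have h2 : 0 < A * (2 * P / (P ^ 2) ^ 2) := by positivity
    linarith
  -- strict convexity
  have hconv : StrictConvexOn ℝ (Ioi (0:ℝ)) f := by
    apply strictConvexOn_of_deriv2_pos (convex_Ioi 0)
      (fun P hP => (hf' P hP).continuousAt.continuousWithinAt)
    intro P hP
    rw [interior_Ioi] at hP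
    show 0 < deriv (deriv f) P
    exact hpos P hP
  have key : ∀ a b c : ℝ, 0 < a → a < b → b < c →
      f a = 0 → f b = 0 → f c = 0 → False := by
    intro a b c ha hab hbc fa fb fc
    have hac : a < c := hab.trans hbc
    have ht : (0:ℝ) < (c - b) / (c - a) := div_pos (by linarith) (by linarith)
    have ht' : (0:ℝ) < (b - a) / (c - a) := div_pos (by linarith) (by linarith)
    have hca : c - a ≠ 0 := by linarith
    have hsum : (c - b) / (c - a) + (b - a) / (c - a) = 1 := by
      field_simp
      ring
    have hlt := hconv.2 (mem_Ioi.2 ha) (mem_Ioi.2 (by linarith : (0:ℝ) < c))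
      hac.ne ht ht' hsum
    rw [smul_eq_mul, smul_eq_mul, smul_eq_mul, smul_eq_mul, fa, fc] at hlt
    have hbval : (c - b) / (c - a) * a + (b - a) / (c - a) * c = b := by
      field_simp
      ring
    rw [hbval, fb] at hlt
    linarith
  refine ⟨hfPp, hfPm, hpos, ?_⟩
  intro P hP hfP
  by_contra hcon
  push_neg at hcon
  obtain ⟨h1, h2⟩ := hcon
  rcases h1.lt_or_gt with hP1 | hP1 <;> rcases h2.lt_or_gt with hP2 | hP2 <;>
    rcases hne.lt_or_gt with hpm | hpm
  all_goals first
    | exact key P Pp Pm hP hP1 hpm hfP hfPp hfPm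
    | exact key P Pm Pp hP hP2 hpm hfP hfPm hfPp
    | exact key Pp P Pm hPp hP1 hP2 hfPp hfP hfPm
    | exact key Pm P Pp hPm hP2 hP1 hfPm hfP hfPp
    | exact key Pp Pm P hPp hpm hP2 hfPp hfPm hfP
    | exact key Pm Pp P hPm hpm hP1 hfPm hfPp hfP
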